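/- For fixed k ≥ 1, fixed ℓ ≥ 0, and fixed φ > 0, the ratio H_ℓ(n) = φ^ℓ · S(n-ℓ, k, φ)/S(n, k, φ) converges to (φ/(k + φ))^ℓ as n → ∞. -/

import Mathlib

open Finset Filter Real

/-- Central Stirling numbers of the second kind. -/
def stirling2 : ℕ → ℕ → ℕ
  | 0, 0 => 1
  | 0, _ + 1 => 0
  | _ + 1, 0 => 0
  | n + 1, k + 1 => (k + 1) * stirling2 n (k + 1) + stirling2 n k

/-- Noncentral Stirling numbers of the second kind. -/
noncomputable def ncS (n k : ℕ) (φ : ℝ) : ℝ :=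
  ∑ j ∈ Finset.range (n + 1), (n.choose j : ℝ) * φ ^ (n - j) * (stirling2 j k : ℝ)

/-- Spillage mass function. -/
noncomputable def spillage (r n k : ℕ) (φ : ℝ) : ℝ :=
  (n.choose (k + r) : ℝ) * φ ^ (n - k - r) * (stirling2 (k + r) k : ℝ) / ncS n k φ

lemma stirling2_eq_zero : ∀ {n k : ℕ}, n < k → stirling2 n k = 0
  | 0, k+1, _ => rfl
  | n+1, k+1, h => by
    have h1 : n < k + 1 := by omega
    have h2 : n < k := by omega
    simp [stirling2, stirling2_eq_zero h1, stirling2_eq_zero h2]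

lemma stirling2_self (k : ℕ) : stirling2 k k = 1 := by
  induction k with
  | zero => rfl
  | succ k ih =>
    simp [stirling2, ih, stirling2_eq_zero (Nat.lt_succ_self k)]

lemma ncS_nonneg (n k : ℕ) {φ : ℝ} (hφ : 0 ≤ φ) : 0 ≤ ncS n k φ := by
  refine Finset.sum_nonneg fun j _ => ?_
  positivity

lemma ncS_pos {n k : ℕ} (hkn : k ≤ n) {φ : ℝ} (hφ : 0 < φ) : 0 < ncS n k φ := by
  refine Finset.sum_pos' (fun j _ => by positivity) ⟨k, ?_, ?_⟩
  · exact Finset.mem_range.mpr (by omega)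
  · have h1 : (0:ℝ) < (n.choose k : ℝ) := by
      exact_mod_cast Nat.choose_pos hkn
    rw [stirling2_self]
    push_cast
    positivity

lemma ncS_zero (n : ℕ) (φ : ℝ) : ncS n 0 φ = φ ^ n := by
  rw [ncS, Finset.sum_range_succ']
  have h : ∀ j ∈ Finset.range n,
      (n.choose (j+1) : ℝ) * φ ^ (n - (j+1)) * (stirling2 (j+1) 0 : ℝ) = 0 := by
    intro j _
    simp [stirling2]
  rw [Finset.sum_congr rfl h]
  simp [stirling2]

lemma ncS_rec (n k : ℕ) (φ : ℝ) :
    ncS (n+1) (k+1) φ = ((k:ℝ) + 1 + φ) * ncS n (k+1) φ + ncS n k φ := by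
  have key : ncS (n+1) (k+1) φ
      = ∑ j ∈ Finset.range (n+1),
          ((n.choose j : ℝ) * φ ^ (n - j) * (stirling2 (j+1) (k+1) : ℝ)
            + (n.choose (j+1) : ℝ) * φ ^ (n - j) * (stirling2 (j+1) (k+1) : ℝ)) := by
    rw [ncS, Finset.sum_range_succ']
    have h0 : ((n+1).choose 0 : ℝ) * φ ^ (n + 1 - 0) * (stirling2 0 (k+1) : ℝ) = 0 := by
      simp [stirling2]
    rw [h0, add_zero]
    refine Finset.sum_congr rfl fun j _ => ?_
    have hc : ((n+1).choose (j+1) : ℝ) = (n.choose j : ℝ) + (n.choose (j+1) : ℝ) := by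
      rw [Nat.choose_succ_succ]; push_cast; ring
    have hs : n + 1 - (j+1) = n - j := by omega
    rw [hc, hs]; ring
  rw [key, Finset.sum_add_distrib]
  have h1 : ∑ j ∈ Finset.range (n+1),
      (n.choose j : ℝ) * φ ^ (n - j) * (stirling2 (j+1) (k+1) : ℝ)
      = ((k:ℝ)+1) * ncS n (k+1) φ + ncS n k φ := by
    have : ∀ j ∈ Finset.range (n+1),
        (n.choose j : ℝ) * φ ^ (n - j) * (stirling2 (j+1) (k+1) : ℝ)
        = ((k:ℝ)+1) * ((n.choose j : ℝ) * φ ^ (n - j) * (stirling2 j (k+1) : ℝ))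
          + (n.choose j : ℝ) * φ ^ (n - j) * (stirling2 j k : ℝ) := by
      intro j _
      show (n.choose j : ℝ) * φ ^ (n - j) * (((k+1) * stirling2 j (k+1) + stirling2 j k : ℕ) : ℝ) = _
      push_cast
      ring
    rw [Finset.sum_congr rfl this, Finset.sum_add_distrib, ← Finset.mul_sum]
    rfl
  have h2 : ∑ j ∈ Finset.range (n+1),
      (n.choose (j+1) : ℝ) * φ ^ (n - j) * (stirling2 (j+1) (k+1) : ℝ)
      = φ * ncS n (k+1) φ := by
    rw [ncS, Finset.mul_sum]
    rw [Finset.sum_range_succ]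
    have hn : (n.choose (n+1) : ℝ) = 0 := by
      simp [Nat.choose_eq_zero_of_lt]
    rw [hn]
    simp only [zero_mul, mul_zero, add_zero]
    rw [Finset.sum_range_succ']
    have h00 : φ * ((n.choose 0 : ℝ) * φ ^ (n - 0) * (stirling2 0 (k+1) : ℝ)) = 0 := by
      simp [stirling2]
    rw [h00, add_zero]
    refine Finset.sum_congr rfl fun j hj => ?_
    have hj' : j < n := Finset.mem_range.mp hj
    have : φ ^ (n - j) = φ * φ ^ (n - (j+1)) := by
      rw [← pow_succ']
      congr 1
      omega
    rw [this]; ring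
  rw [h1, h2]; ring

lemma ncS_rec' {k : ℕ} (hk : 1 ≤ k) (n : ℕ) (φ : ℝ) :
    ncS (n+1) k φ = ((k:ℝ) + φ) * ncS n k φ + ncS n (k-1) φ := by
  obtain ⟨m, rfl⟩ := Nat.exists_eq_add_of_le hk
  have := ncS_rec n m φ
  simp only [Nat.add_sub_cancel_left] at *
  rw [show 1 + m = m + 1 by ring, this]
  push_cast
  ring_nf

/-- main ratio lemma by induction on k -/
lemma ratio_tendsto (φ : ℝ) (hφ : 0 < φ) :
    ∀ k : ℕ, Filter.Tendsto (fun n : ℕ => ncS (n+1) k φ / ncS n k φ)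
      Filter.atTop (nhds ((k:ℝ) + φ)) := by
  intro k
  induction k with
  | zero =>
    have : (fun n : ℕ => ncS (n+1) 0 φ / ncS n 0 φ) = fun _ => φ := by
      funext n
      rw [ncS_zero, ncS_zero, pow_succ]
      field_simp
    rw [this]
    simpa using (tendsto_const_nhds : Filter.Tendsto (fun _ : ℕ => φ) _ _)
  | succ k ih =>
    -- key: ncS n k φ / ncS n (k+1) φ → 0
    have hd : (0:ℝ) < (k:ℝ) + 1 + φ := by positivity
    have hc : (0:ℝ) < (k:ℝ) + φ + 1/2 := by positivity
    have hq : (k:ℝ) + φ + 1/2 < (k:ℝ) + 1 + φ := by linarith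
    -- eventually ncS (n+1) k ≤ c * ncS n k
    have hev : ∀ᶠ n in Filter.atTop, ncS (n+1) k φ ≤ ((k:ℝ) + φ + 1/2) * ncS n k φ := by
      have h1 : ∀ᶠ n in Filter.atTop,
          ncS (n+1) k φ / ncS n k φ < (k:ℝ) + φ + 1/2 :=
        ih.eventually_lt_const (by linarith)
      filter_upwards [h1, Filter.eventually_ge_atTop k] with n h1 h2
      have hp : 0 < ncS n k φ := ncS_pos h2 hφ
      calc ncS (n+1) k φ = (ncS (n+1) k φ / ncS n k φ) * ncS n k φ := by
            field_simp
        _ ≤ ((k:ℝ) + φ + 1/2) * ncS n k φ := by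
            apply mul_le_mul_of_nonneg_right (le_of_lt h1) hp.le
    obtain ⟨N0, hN0⟩ := Filter.eventually_atTop.mp hev
    set N := max N0 (k+1) with hN
    have hNk : k + 1 ≤ N := le_max_right _ _
    have hbN : 0 < ncS N (k+1) φ := ncS_pos hNk hφ
    set c := (k:ℝ) + φ + 1/2
    set d := (k:ℝ) + 1 + φ
    have hgrow : ∀ m : ℕ, ncS (N + m) k φ ≤ c ^ m * ncS N k φ
        ∧ d ^ m * ncS N (k+1) φ ≤ ncS (N + m) (k+1) φ := by
      intro m
      induction m with
      | zero => simp
      | succ m ihm =>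
        constructor
        · have := hN0 (N + m) (le_trans (le_max_left _ _) (Nat.le_add_right _ _))
          calc ncS (N + (m+1)) k φ = ncS ((N + m) + 1) k φ := by ring_nf
            _ ≤ c * ncS (N + m) k φ := this
            _ ≤ c * (c ^ m * ncS N k φ) :=
                mul_le_mul_of_nonneg_left ihm.1 hc.le
            _ = c ^ (m+1) * ncS N k φ := by ring
        · have hrec := ncS_rec (N + m) k φ
          have hnn : 0 ≤ ncS (N + m) k φ := ncS_nonneg _ _ hφ.le
          calc d ^ (m+1) * ncS N (k+1) φ = d * (d ^ m * ncS N (k+1) φ) := by ring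
            _ ≤ d * ncS (N + m) (k+1) φ :=
                mul_le_mul_of_nonneg_left ihm.2 hd.le
            _ ≤ d * ncS (N + m) (k+1) φ + ncS (N + m) k φ := by linarith
            _ = ncS ((N + m) + 1) (k+1) φ := (hrec).symm
            _ = ncS (N + (m+1)) (k+1) φ := by ring_nf
    have hsmall : Filter.Tendsto (fun n : ℕ => ncS n k φ / ncS n (k+1) φ)
        Filter.atTop (nhds 0) := by
      set C := ncS N k φ / ncS N (k+1) φ
      have hC : 0 ≤ C := div_nonneg (ncS_nonneg _ _ hφ.le) hbN.le
      have hqlt : c / d < 1 := (div_lt_one hd).mpr hq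
      have hq0 : 0 ≤ c / d := div_nonneg hc.le hd.le
      have hgeo : Filter.Tendsto (fun n : ℕ => C * (c/d) ^ (n - N))
          Filter.atTop (nhds 0) := by
        have h1 : Filter.Tendsto (fun m : ℕ => (c/d) ^ m) Filter.atTop (nhds 0) :=
          tendsto_pow_atTop_nhds_zero_of_lt_one hq0 hqlt
        have h2 : Filter.Tendsto (fun n : ℕ => n - N) Filter.atTop Filter.atTop :=
          Filter.tendsto_sub_atTop_nat N
        have := (h1.comp h2).const_mul C
        simpa using this
      refine squeeze_zero' ?_ ?_ hgeo
      · filter_upwards [Filter.eventually_ge_atTop N] with n hn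
        exact div_nonneg (ncS_nonneg _ _ hφ.le) (ncS_nonneg _ _ hφ.le)
      · filter_upwards [Filter.eventually_ge_atTop N] with n hn
        obtain ⟨m, rfl⟩ := Nat.exists_eq_add_of_le hn
        have hg := hgrow m
        have hbn : 0 < ncS (N + m) (k+1) φ := ncS_pos (by omega) hφ
        have hd' : 0 < d ^ m * ncS N (k+1) φ := by positivity
        have hsub : N + m - N = m := by omega
        rw [hsub]
        calc ncS (N+m) k φ / ncS (N+m) (k+1) φ
            ≤ (c ^ m * ncS N k φ) / (d ^ m * ncS N (k+1) φ) :=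
              div_le_div₀ (mul_nonneg (by positivity) (ncS_nonneg _ _ hφ.le)) hg.1 hd' hg.2
          _ = C * (c/d) ^ m := by
              rw [div_pow]
              field_simp [C]
              simp only [C]; field_simp
    -- conclude
    have heq : ∀ᶠ n in Filter.atTop,
        ((k:ℝ) + 1 + φ) + ncS n k φ / ncS n (k+1) φ
          = ncS (n+1) (k+1) φ / ncS n (k+1) φ := by
      filter_upwards [Filter.eventually_ge_atTop (k+1)] with n hn
      have hp : 0 < ncS n (k+1) φ := ncS_pos hn hφ
      rw [ncS_rec n k φ]
      field_simp
    have := (tendsto_const_nhds.add hsmall :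
      Filter.Tendsto (fun n : ℕ => ((k:ℝ) + 1 + φ) + ncS n k φ / ncS n (k+1) φ)
        Filter.atTop (nhds (((k:ℝ) + 1 + φ) + 0)))
    have h0 : ((k:ℝ) + 1 + φ) + 0 = ((k+1 : ℕ) : ℝ) + φ := by push_cast; ring
    rw [h0] at this
    exact this.congr' heq

theorem stmt10 (k ℓ : ℕ) (hk : 1 ≤ k) (φ : ℝ) (hφ : 0 < φ) :
    Filter.Tendsto (fun n : ℕ => φ ^ ℓ * ncS (n - ℓ) k φ / ncS n k φ)
      Filter.atTop (nhds ((φ / ((k : ℝ) + φ)) ^ ℓ)) := by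
  have hkφ : (0:ℝ) < (k:ℝ) + φ := by positivity
  have hinv : Filter.Tendsto (fun n : ℕ => ncS n k φ / ncS (n+1) k φ)
      Filter.atTop (nhds (((k:ℝ) + φ)⁻¹)) := by
    have := (ratio_tendsto φ hφ k).inv₀ hkφ.ne'
    refine this.congr fun n => ?_
    rw [inv_div]
  have hmain : ∀ ℓ : ℕ, Filter.Tendsto (fun n : ℕ => ncS (n - ℓ) k φ / ncS n k φ)
      Filter.atTop (nhds ((((k:ℝ) + φ)⁻¹) ^ ℓ)) := by
    intro ℓ
    induction ℓ with
    | zero =>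
      have heq : ∀ᶠ n in Filter.atTop,
          (1:ℝ) = ncS (n - 0) k φ / ncS n k φ := by
        filter_upwards [Filter.eventually_ge_atTop k] with n hn
        rw [Nat.sub_zero, div_self (ncS_pos hn hφ).ne']
      simpa using (tendsto_const_nhds.congr' heq)
    | succ ℓ ih =>
      have hfirst : Filter.Tendsto (fun n : ℕ => ncS (n - (ℓ+1)) k φ / ncS (n - ℓ) k φ)
          Filter.atTop (nhds (((k:ℝ) + φ)⁻¹)) := by
        have hcomp := hinv.comp (Filter.tendsto_sub_atTop_nat (ℓ+1))
        refine hcomp.congr' ?_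
        filter_upwards [Filter.eventually_ge_atTop (ℓ+1)] with n hn
        have : n - (ℓ+1) + 1 = n - ℓ := by omega
        simp only [Function.comp_apply, this]
      have heq : ∀ᶠ n in Filter.atTop,
          (ncS (n - (ℓ+1)) k φ / ncS (n - ℓ) k φ) * (ncS (n - ℓ) k φ / ncS n k φ)
            = ncS (n - (ℓ+1)) k φ / ncS n k φ := by
        filter_upwards [Filter.eventually_ge_atTop (k + ℓ + 1)] with n hn
        have hp : 0 < ncS (n - ℓ) k φ := ncS_pos (by omega) hφ
        field_simp
      have := (hfirst.mul ih).congr' heq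
      rw [← pow_succ'] at this
      exact this
  have := (hmain ℓ).const_mul (φ ^ ℓ)
  have h0 : φ ^ ℓ * (((k:ℝ) + φ)⁻¹) ^ ℓ = (φ / ((k:ℝ) + φ)) ^ ℓ := by
    rw [div_pow, inv_pow]
    ring
  rw [h0] at this
  refine this.congr fun n => ?_
  rw [mul_div_assoc]
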